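/- In a DAG G over V ∪ R with all nodes of R being leaves and Assumption 1 (no R node is a parent of any V node) holding, if X and Y in V are NOT d-separated by Z ⊆ V \ {X, Y}, then X and Y are NOT d-separated by Z ∪ S for any S ⊆ R consisting of indicators, i.e., adding leaf indicator nodes to the conditioning set cannot block an active path unless some indicator lies on the path as a non-collider — which is impossible since leaves on a path must be colliders or endpoints. Hence d-connection given Z implies d-connection given Z ∪ S. -/

import Mathlib

/-- A directed graph (edge relation) is acyclic. -/
def IsAcyclic {α : Type*} (G : α → α → Prop) : Prop :=
  ∀ v, ¬ Relation.TransGen G v v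

/-- A leaf node: no outgoing edges. -/
def IsLeaf {α : Type*} (G : α → α → Prop) (v : α) : Prop :=
  ∀ w, ¬ G v w

/-- An undirected path from `x` to `y`: a list of at least two distinct vertices,
starting at `x`, ending at `y`, consecutive vertices adjacent (in either direction). -/
def IsUPath {α : Type*} (G : α → α → Prop) (x y : α) (p : List α) : Prop :=
  2 ≤ p.length ∧ p.head? = some x ∧ p.getLast? = some y ∧ p.Nodup ∧
    p.Chain' (fun a b => G a b ∨ G b a)

/-- The vertex at (interior) position `i` of `p` is a collider:
both adjacent path edges point into it. -/
def ColliderAt {α : Type*} (G : α → α → Prop) (p : List α) (i : ℕ) : Prop :=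
  ∃ a b c, p[i-1]? = some a ∧ p[i]? = some b ∧ p[i+1]? = some c ∧ G a b ∧ G c b

/-- A path is active given conditioning set `S`: every interior collider is in `S`
or has a descendant in `S`, and every interior non-collider is not in `S`. -/
def ActivePath {α : Type*} (G : α → α → Prop) (S : Set α) (x y : α) (p : List α) : Prop :=
  IsUPath G x y p ∧
    ∀ i, 0 < i → i + 1 < p.length →
      ∀ b, p[i]? = some b →
        (ColliderAt G p i → b ∈ S ∨ ∃ d ∈ S, Relation.ReflTransGen G b d) ∧
        (¬ ColliderAt G p i → b ∉ S)

/-- d-separation: no active undirected path between `x` and `y` given `S`. -/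
def DSep {α : Type*} (G : α → α → Prop) (x y : α) (S : Set α) : Prop :=
  ∀ p : List α, ¬ ActivePath G S x y p


/-- in a DAG over `V ∪ R` with all nodes of `R` leaves (so in
particular no node of `R` is a parent of any node of `V`), if `X, Y ∈ V` are
d-connected given `Z ⊆ V \ {X, Y}`, then they remain d-connected given `Z ∪ S`
for any `S ⊆ R` disjoint from `{X, Y} ∪ Z`. -/
theorem dconnected_of_union_leaf_indicators {α : Type*} (G : α → α → Prop)
    (hG : IsAcyclic G) (V R : Set α) (hVR : Disjoint V R)
    (hleaf : ∀ r ∈ R, IsLeaf G r)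
    (hnoparent : ∀ r ∈ R, ∀ v ∈ V, ¬ G r v)
    (X Y : α) (hX : X ∈ V) (hY : Y ∈ V) (hXY : X ≠ Y)
    (Z : Set α) (hZ : Z ⊆ V \ {X, Y})
    (S : Set α) (hS : S ⊆ R) (hSdisj : Disjoint S ({X, Y} ∪ Z))
    (hconn : ¬ DSep G X Y Z) : ¬ DSep G X Y (Z ∪ S) := by
  simp only [DSep, not_forall, not_not] at hconn ⊢
  obtain ⟨p, hup, hint⟩ := hconn
  refine ⟨p, hup, fun i hi0 hi1 b hb => ?_⟩
  obtain ⟨hcol, hncol⟩ := hint i hi0 hi1 b hb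
  constructor
  · intro h
    rcases hcol h with h' | ⟨d, hd, hdd⟩
    · exact Or.inl (Or.inl h')
    · exact Or.inr ⟨d, Or.inl hd, hdd⟩
  · intro h hmem
    rcases hmem with hZ' | hS'
    · exact hncol h hZ'
    · -- b is a leaf, so it must be a collider, contradiction
      apply h
      have hchain := hup.2.2.2.2
      rw [List.Chain', List.isChain_iff_getElem] at hchain
      have hi : i < p.length := Nat.lt_of_succ_lt hi1
      have hbi : p[i]'hi = b := by
        have := List.getElem?_eq_getElem hi
        rw [hb] at this; exact (Option.some.injEq _ _ ▸ this.symm)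
      have h1 : i - 1 + 1 < p.length := by omega
      have h2 : i + 1 < p.length := by omega
      have e1 := hchain (i - 1) h1
      have e2 := hchain i h2
      have hi1' : i - 1 + 1 = i := by omega
      simp only [List.get_eq_getElem, hi1', hbi] at e1 e2
      have hleafb := hleaf b (hS hS')
      refine ⟨p[i-1]'(by omega), b, p[i+1]'(by omega),
        List.getElem?_eq_getElem (by omega), hb, List.getElem?_eq_getElem (by omega), ?_, ?_⟩
      · rcases e1 with h' | h'
        · exact h'
        · exact absurd h' (hleafb _)
      · rcases e2 with h' | h'
        · exact absurd h' (hleafb _)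
        · exact h'
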